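/- arXiv:2512.09770 — 2 statements merged into one kernel-verified Lean document; each statement's English description precedes it below -/
import Mathlib

section
/- For 1 ≤ p ≤ ∞ and 0 < t ≤ 1, the convolution operator f ↦ ∫ (√t + |x−y|)^{−4} f(y) dy is bounded on the weighted space L^p(ℝ³, (1+|x|²)^{−2} dx) with operator norm at most C t^{−1/2}, where C is independent of t and p. -/
open MeasureTheory ENNReal

noncomputable abbrev E3 : Type := EuclideanSpace ℝ (Fin 3)

/-- The weighted measure with density `Φ₄(x) = (1+|x|²)^{-2}`. -/
noncomputable def muPhi4 : Measure E3 :=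
  volume.withDensity (fun x => ENNReal.ofReal ((1 + ‖x‖ ^ 2) ^ (-2 : ℝ)))

lemma rpow_neg_four {x : ℝ} (hx : 0 ≤ x) : x ^ (-4 : ℝ) = (x ^ 4)⁻¹ := by
  rw [show (-4 : ℝ) = -((4:ℕ):ℝ) by norm_num, Real.rpow_neg hx, Real.rpow_natCast]

lemma rpow_neg_two {x : ℝ} (hx : 0 ≤ x) : x ^ (-2 : ℝ) = (x ^ 2)⁻¹ := by
  rw [show (-2 : ℝ) = -((2:ℕ):ℝ) by norm_num, Real.rpow_neg hx, Real.rpow_natCast]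

lemma finrank_E3 : Module.finrank ℝ E3 = 3 := by
  simp [finrank_euclideanSpace]

lemma integrable_base : Integrable (fun u : E3 => (1 + ‖u‖) ^ (-4 : ℝ)) := by
  apply integrable_one_add_norm (E := E3)
  rw [finrank_E3]; norm_num

lemma cont_kt {t : ℝ} (ht : 0 < t) :
    Continuous (fun z : E3 => (Real.sqrt t + ‖z‖) ^ (-4 : ℝ)) := by
  apply Continuous.rpow_const (continuous_const.add continuous_norm)
  intro z
  left
  have := Real.sqrt_pos.2 ht
  show Real.sqrt t + ‖z‖ ≠ 0
  positivity

lemma cont_w : Continuous (fun x : E3 => (1 + ‖x‖ ^ 2) ^ (-2 : ℝ)) := by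
  apply Continuous.rpow_const (continuous_const.add (continuous_norm.pow 2))
  intro z
  left
  show (1 + ‖z‖ ^ 2) ≠ 0
  positivity

lemma kt_scaling {t : ℝ} (ht : 0 < t) (z : E3) :
    (Real.sqrt t + ‖z‖) ^ (-4 : ℝ)
      = (t ^ 2)⁻¹ * (1 + ‖(Real.sqrt t)⁻¹ • z‖) ^ (-4 : ℝ) := by
  have hs : 0 < Real.sqrt t := Real.sqrt_pos.2 ht
  have ht2 : Real.sqrt t ^ 2 = t := Real.sq_sqrt ht.le
  have hnorm : ‖(Real.sqrt t)⁻¹ • z‖ = (Real.sqrt t)⁻¹ * ‖z‖ := by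
    rw [norm_smul, Real.norm_eq_abs, abs_of_pos (by positivity)]
  rw [hnorm, rpow_neg_four (by positivity), rpow_neg_four (by positivity)]
  have h1 : (1 : ℝ) + (Real.sqrt t)⁻¹ * ‖z‖ = (Real.sqrt t + ‖z‖) / Real.sqrt t := by
    field_simp
  rw [h1, div_pow]
  rw [show (Real.sqrt t) ^ 4 = t ^ 2 by rw [show (Real.sqrt t)^4 = (Real.sqrt t^2)^2 by ring, ht2]]
  have h2 : (0:ℝ) < (Real.sqrt t + ‖z‖) ^ 4 := by positivity
  field_simp

lemma integral_kt {t : ℝ} (ht : 0 < t) :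
    ∫ z : E3, (Real.sqrt t + ‖z‖) ^ (-4 : ℝ)
      = (Real.sqrt t)⁻¹ * ∫ u : E3, (1 + ‖u‖) ^ (-4 : ℝ) := by
  have hs : 0 < Real.sqrt t := Real.sqrt_pos.2 ht
  have ht2 : Real.sqrt t ^ 2 = t := Real.sq_sqrt ht.le
  simp_rw [kt_scaling ht]
  rw [integral_const_mul]
  rw [MeasureTheory.Measure.integral_comp_inv_smul volume
    (fun u : E3 => (1 + ‖u‖) ^ (-4 : ℝ)) (Real.sqrt t)]
  rw [finrank_E3]
  rw [abs_of_pos (by positivity), smul_eq_mul]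
  rw [show (Real.sqrt t) ^ 3 = t * Real.sqrt t by rw [show (Real.sqrt t)^3 = (Real.sqrt t^2) * Real.sqrt t by ring, ht2]]
  have h4 : (t:ℝ) ^ 2 ≠ 0 := by positivity
  field_simp
  linear_combination (∫ (x : E3), (1 + ‖x‖) ^ (-4:ℝ)) * ht2

lemma integrable_kt {t : ℝ} (ht : 0 < t) :
    Integrable (fun z : E3 => (Real.sqrt t + ‖z‖) ^ (-4 : ℝ)) := by
  have hs : 0 < Real.sqrt t := Real.sqrt_pos.2 ht
  have : (fun z : E3 => (Real.sqrt t + ‖z‖) ^ (-4 : ℝ))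
      = fun z : E3 => (t ^ 2)⁻¹ * (1 + ‖(Real.sqrt t)⁻¹ • z‖) ^ (-4 : ℝ) :=
    funext fun z => kt_scaling ht z
  rw [this]
  exact (integrable_base.comp_smul (by positivity : ((Real.sqrt t)⁻¹ : ℝ) ≠ 0)).const_mul _

lemma lintegral_kt {t : ℝ} (ht : 0 < t) :
    ∫⁻ z : E3, ENNReal.ofReal ((Real.sqrt t + ‖z‖) ^ (-4 : ℝ))
      = ENNReal.ofReal ((Real.sqrt t)⁻¹ * ∫ u : E3, (1 + ‖u‖) ^ (-4 : ℝ)) := by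
  rw [← ofReal_integral_eq_lintegral_ofReal (integrable_kt ht)
    (Filter.Eventually.of_forall fun z => by positivity), integral_kt ht]

lemma integrable_w : Integrable (fun x : E3 => (1 + ‖x‖ ^ 2) ^ (-2 : ℝ)) := by
  refine (integrable_base.const_mul 4).mono' cont_w.aestronglyMeasurable
    (Filter.Eventually.of_forall fun x => ?_)
  have ha : (0:ℝ) ≤ ‖x‖ := norm_nonneg x
  rw [Real.norm_eq_abs, abs_of_nonneg (by positivity)]
  rw [rpow_neg_two (by positivity), rpow_neg_four (by positivity)]
  rw [show (4:ℝ) * ((1 + ‖x‖) ^ 4)⁻¹ = (((1 + ‖x‖) ^ 4) / 4)⁻¹ by field_simp]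
  apply inv_anti₀ (by positivity)
  nlinarith [sq_nonneg (1 - ‖x‖), sq_nonneg ‖x‖, sq_nonneg (1 - ‖x‖^2), sq_nonneg (‖x‖ - ‖x‖^2)]

lemma lintegral_w :
    ∫⁻ x : E3, ENNReal.ofReal ((1 + ‖x‖ ^ 2) ^ (-2 : ℝ))
      = ENNReal.ofReal (∫ x : E3, (1 + ‖x‖ ^ 2) ^ (-2 : ℝ)) :=
  (ofReal_integral_eq_lintegral_ofReal integrable_w
    (Filter.Eventually.of_forall fun x => by positivity)).symm

lemma schur_ptwise {t : ℝ} (ht : 0 < t) (x y : E3) :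
    (Real.sqrt t + ‖x - y‖) ^ (-4 : ℝ) * (1 + ‖x‖ ^ 2) ^ (-2 : ℝ)
      ≤ (64 * (Real.sqrt t + ‖x - y‖) ^ (-4 : ℝ) + 16 * (1 + ‖x‖ ^ 2) ^ (-2 : ℝ))
          * (1 + ‖y‖ ^ 2) ^ (-2 : ℝ) := by
  have hs : 0 < Real.sqrt t := Real.sqrt_pos.2 ht
  set a := ‖x‖ with ha
  set b := ‖y‖ with hb
  set d := ‖x - y‖ with hd
  have ha0 : 0 ≤ a := norm_nonneg x
  have hb0 : 0 ≤ b := norm_nonneg y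
  have hd0 : 0 ≤ d := norm_nonneg _
  have htri : b ≤ a + d := by
    calc b = ‖x - (x - y)‖ := by rw [hb]; congr 1; abel
    _ ≤ ‖x‖ + ‖x - y‖ := norm_sub_le _ _
  rw [rpow_neg_four (by positivity), rpow_neg_two (by positivity),
    rpow_neg_two (by positivity)]
  set K := ((Real.sqrt t + d) ^ 4)⁻¹ with hK
  set Wx := ((1 + a ^ 2) ^ 2)⁻¹ with hWx
  set Wy := ((1 + b ^ 2) ^ 2)⁻¹ with hWy
  have hKpos : 0 < K := by rw [hK]; positivity
  have hWxpos : 0 < Wx := by rw [hWx]; positivity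
  have hWypos : 0 < Wy := by rw [hWy]; positivity
  by_cases hcase : d ≤ (1 + b) / 2
  · -- near region : Wx ≤ 64 Wy
    have h1 : 1 + b ≤ 2 * (1 + a) := by linarith
    have h2 : (1 + b ^ 2) ≤ 8 * (1 + a ^ 2) := by nlinarith [sq_nonneg (1 - a)]
    have h3 : (1 + b ^ 2) ^ 2 ≤ 64 * (1 + a ^ 2) ^ 2 := by nlinarith [sq_nonneg (1 + a^2)]
    have h4 : Wx ≤ 64 * Wy := by
      rw [hWx, hWy, show (64:ℝ) * ((1 + b ^ 2) ^ 2)⁻¹ = ((1 + b ^ 2) ^ 2 / 64)⁻¹ by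
        field_simp]
      apply inv_anti₀ (by positivity)
      linarith
    nlinarith [mul_le_mul_of_nonneg_left h4 hKpos.le, mul_pos hWxpos hWypos]
  · -- far region : K ≤ 16 Wy
    push_neg at hcase
    have hb2 : (0:ℝ) < (1 + b) / 2 := by positivity
    have h5 : K ≤ 16 * Wy := by
      have s1 : K ≤ (d ^ 4)⁻¹ := by
        rw [hK]
        apply inv_anti₀ (pow_pos (lt_trans hb2 hcase) 4)
        have : d ≤ Real.sqrt t + d := by linarith
        exact pow_le_pow_left₀ hd0 this 4
      have s2 : (d ^ 4)⁻¹ ≤ (((1 + b) / 2) ^ 4)⁻¹ := by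
        apply inv_anti₀ (by positivity)
        exact pow_le_pow_left₀ hb2.le hcase.le 4
      have s3 : (((1 + b) / 2) ^ 4)⁻¹ = 16 * ((1 + b) ^ 4)⁻¹ := by
        rw [div_pow]
        rw [show ((2:ℝ) ^ 4) = 16 by norm_num]
        field_simp
      have s4 : ((1 + b) ^ 4)⁻¹ ≤ Wy := by
        rw [hWy]
        apply inv_anti₀ (by positivity)
        nlinarith [sq_nonneg b]
      calc K ≤ (d ^ 4)⁻¹ := s1
      _ ≤ (((1 + b) / 2) ^ 4)⁻¹ := s2
      _ = 16 * ((1 + b) ^ 4)⁻¹ := s3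
      _ ≤ 16 * Wy := by linarith
    nlinarith [mul_le_mul_of_nonneg_right h5 hWxpos.le, mul_pos hKpos hWypos]

lemma L1bound {k w : E3 → ℝ≥0∞} (hk : Measurable k) (hw : Measurable w) {A : ℝ≥0∞}
    (hii : ∀ y, ∫⁻ x, k (x - y) * w x ≤ A * w y) {h : E3 → ℝ≥0∞} (hh : Measurable h) :
    ∫⁻ x, (∫⁻ y, k (x - y) * h y) * w x ≤ A * ∫⁻ y, h y * w y := by
  have hmeas : Measurable fun p : E3 × E3 => k (p.1 - p.2) * h p.2 * w p.1 :=
    ((hk.comp (measurable_fst.sub measurable_snd)).mul (hh.comp measurable_snd)).mul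
      (hw.comp measurable_fst)
  calc ∫⁻ x, (∫⁻ y, k (x - y) * h y) * w x
      = ∫⁻ x, ∫⁻ y, k (x - y) * h y * w x := by
        refine lintegral_congr fun x => ?_
        exact (lintegral_mul_const'' (w x)
          (show AEMeasurable (fun y : E3 => k (x - y) * h y) volume by fun_prop)).symm
    _ = ∫⁻ y, ∫⁻ x, k (x - y) * h y * w x := lintegral_lintegral_swap hmeas.aemeasurable
    _ = ∫⁻ y, h y * ∫⁻ x, k (x - y) * w x := by
        refine lintegral_congr fun y => ?_
        rw [← lintegral_const_mul (h y) (show Measurable fun x : E3 => k (x - y) * w x by fun_prop)]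
        refine lintegral_congr fun x => ?_
        ring
    _ ≤ ∫⁻ y, h y * (A * w y) := lintegral_mono fun y => mul_le_mul_right (hii y) _
    _ = A * ∫⁻ y, h y * w y := by
        have e := lintegral_const_mul (μ := volume) A (hh.mul hw)
        simp only [Pi.mul_apply] at e
        rw [← e]
        refine lintegral_congr fun y => ?_
        ring

lemma schur_main {k w : E3 → ℝ≥0∞} (hk : Measurable k) (hw : Measurable w)
    (hk0 : ∀ z, k z ≠ 0) (hktop : ∀ z, k z ≠ ∞) {A : ℝ≥0∞} (hA0 : A ≠ 0) (hAtop : A ≠ ∞)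
    (hi : ∀ x, ∫⁻ y, k (x - y) ≤ A) (hii : ∀ y, ∫⁻ x, k (x - y) * w x ≤ A * w y)
    {g : E3 → ℝ≥0∞} (hg : Measurable g) {pr : ℝ} (hpr : 1 ≤ pr) :
    ∫⁻ x, (∫⁻ y, k (x - y) * g y) ^ pr * w x ≤ A ^ pr * ∫⁻ y, (g y) ^ pr * w y := by
  rcases eq_or_lt_of_le hpr with h1 | h1
  · simp only [← h1, ENNReal.rpow_one]
    exact L1bound hk hw hii hg
  · set qr : ℝ := pr / (pr - 1) with hqr
    have hpr0 : 0 < pr := lt_trans one_pos h1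
    have hsub : 0 < pr - 1 := by linarith
    have hqr0 : 0 < qr := by positivity
    have hpq : pr.HolderConjugate qr := (Real.holderConjugate_iff_eq_conjExponent h1).2 hqr
    have hconj : 1 / qr + 1 / pr = 1 := by
      have := hpq.inv_add_inv_eq_one
      rw [one_div, one_div]; linarith
    have hprqr : pr / qr + 1 = pr := by rw [hqr]; field_simp; ring
    -- pointwise Hölder
    have key : ∀ x, (∫⁻ y, k (x - y) * g y) ^ pr
        ≤ A ^ (pr / qr) * ∫⁻ y, k (x - y) * (g y) ^ pr := by
      intro x
      have holder := ENNReal.lintegral_mul_le_Lp_mul_Lq volume hpq.symm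
        (f := fun y => k (x - y) ^ (1 / qr)) (g := fun y => k (x - y) ^ (1 / pr) * g y)
        (by fun_prop) (by fun_prop)
      have hsplit : ∀ y : E3, k (x - y) * g y
          = (k (x - y) ^ (1 / qr)) * (k (x - y) ^ (1 / pr) * g y) := by
        intro y
        rw [← mul_assoc, ← ENNReal.rpow_add _ _ (hk0 _) (hktop _), hconj, ENNReal.rpow_one]
      have e1 : ∫⁻ y, k (x - y) ^ (1 / qr) * (k (x - y) ^ (1 / pr) * g y)
          = ∫⁻ y, k (x - y) * g y := lintegral_congr fun y => (hsplit y).symm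
      have e2 : ∀ y : E3, (k (x - y) ^ (1 / qr)) ^ qr = k (x - y) := by
        intro y
        rw [← ENNReal.rpow_mul, one_div, inv_mul_cancel₀ hqr0.ne', ENNReal.rpow_one]
      have e3 : ∀ y : E3, (k (x - y) ^ (1 / pr) * g y) ^ pr = k (x - y) * (g y) ^ pr := by
        intro y
        rw [ENNReal.mul_rpow_of_nonneg _ _ hpr0.le, ← ENNReal.rpow_mul, one_div,
          inv_mul_cancel₀ hpr0.ne', ENNReal.rpow_one]
      simp only [Pi.mul_apply] at holder
      rw [e1] at holder
      have holder2 : ∫⁻ y, k (x - y) * g y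
          ≤ A ^ (1 / qr) * (∫⁻ y, k (x - y) * (g y) ^ pr) ^ (1 / pr) := by
        refine le_trans holder (mul_le_mul' ?_ ?_)
        · rw [lintegral_congr e2]
          exact ENNReal.rpow_le_rpow (hi x) (by positivity)
        · rw [lintegral_congr e3]
      calc (∫⁻ y, k (x - y) * g y) ^ pr
          ≤ (A ^ (1 / qr) * (∫⁻ y, k (x - y) * (g y) ^ pr) ^ (1 / pr)) ^ pr :=
            ENNReal.rpow_le_rpow holder2 hpr0.le
        _ = A ^ (pr / qr) * ∫⁻ y, k (x - y) * (g y) ^ pr := by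
            rw [ENNReal.mul_rpow_of_nonneg _ _ hpr0.le, ← ENNReal.rpow_mul,
              ← ENNReal.rpow_mul, show 1 / qr * pr = pr / qr by ring,
              show 1 / pr * pr = 1 by field_simp, ENNReal.rpow_one]
    calc ∫⁻ x, (∫⁻ y, k (x - y) * g y) ^ pr * w x
        ≤ ∫⁻ x, A ^ (pr / qr) * ((∫⁻ y, k (x - y) * (g y) ^ pr) * w x) := by
          refine lintegral_mono fun x => ?_
          rw [← mul_assoc]
          exact mul_le_mul_left (key x) _
      _ = A ^ (pr / qr) * ∫⁻ x, (∫⁻ y, k (x - y) * (g y) ^ pr) * w x := by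
          refine lintegral_const_mul' _ _ ?_
          exact ENNReal.rpow_ne_top_of_nonneg (by positivity) hAtop
      _ ≤ A ^ (pr / qr) * (A * ∫⁻ y, (g y) ^ pr * w y) :=
          mul_le_mul_right (L1bound hk hw hii (by fun_prop)) _
      _ = A ^ pr * ∫⁻ y, (g y) ^ pr * w y := by
          rw [← mul_assoc]
          congr 1
          nth_rewrite 2 [← ENNReal.rpow_one A]
          rw [← ENNReal.rpow_add _ _ hA0 hAtop, hprqr]

noncomputable def I0v : ℝ := ∫ u : E3, (1 + ‖u‖) ^ (-4 : ℝ)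
noncomputable def JJv : ℝ := ∫ x : E3, (1 + ‖x‖ ^ 2) ^ (-2 : ℝ)
noncomputable def CCv : ℝ := 64 * I0v + 16 * JJv + 1

lemma I0v_nonneg : 0 ≤ I0v := integral_nonneg fun u => by positivity
lemma JJv_nonneg : 0 ≤ JJv := integral_nonneg fun u => by positivity
lemma CCv_pos : 0 < CCv := by
  have := I0v_nonneg; have := JJv_nonneg; unfold CCv; linarith

lemma kmeasE {t : ℝ} (ht : 0 < t) :
    Measurable fun z : E3 => ENNReal.ofReal ((Real.sqrt t + ‖z‖) ^ (-4 : ℝ)) :=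
  (ENNReal.continuous_ofReal.comp (cont_kt ht)).measurable

lemma wmeasE : Measurable fun x : E3 => ENNReal.ofReal ((1 + ‖x‖ ^ 2) ^ (-2 : ℝ)) :=
  (ENNReal.continuous_ofReal.comp cont_w).measurable

lemma cond_i {t : ℝ} (ht : 0 < t) (x : E3) :
    ∫⁻ y, ENNReal.ofReal ((Real.sqrt t + ‖x - y‖) ^ (-4 : ℝ))
      = ENNReal.ofReal ((Real.sqrt t)⁻¹ * I0v) := by
  unfold I0v
  rw [← lintegral_kt ht]
  exact (Measure.measurePreserving_sub_left volume x).lintegral_comp (kmeasE ht)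

lemma sqrt_inv_one_le {t : ℝ} (ht : 0 < t) (ht1 : t ≤ 1) : 1 ≤ (Real.sqrt t)⁻¹ :=
  (one_le_inv₀ (Real.sqrt_pos.2 ht)).2 (Real.sqrt_le_one.mpr ht1)

lemma cond_ii {t : ℝ} (ht : 0 < t) (ht1 : t ≤ 1) (y : E3) :
    ∫⁻ x, ENNReal.ofReal ((Real.sqrt t + ‖x - y‖) ^ (-4 : ℝ))
        * ENNReal.ofReal ((1 + ‖x‖ ^ 2) ^ (-2 : ℝ))
      ≤ ENNReal.ofReal (CCv * (Real.sqrt t)⁻¹)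
        * ENNReal.ofReal ((1 + ‖y‖ ^ 2) ^ (-2 : ℝ)) := by
  have hs : 0 < Real.sqrt t := Real.sqrt_pos.2 ht
  have hs1 : 1 ≤ (Real.sqrt t)⁻¹ := sqrt_inv_one_le ht ht1
  have hint : Integrable (fun x : E3 =>
      64 * (Real.sqrt t + ‖x - y‖) ^ (-4 : ℝ) + 16 * (1 + ‖x‖ ^ 2) ^ (-2 : ℝ)) := by
    exact (((integrable_kt ht).comp_sub_right y).const_mul 64).add (integrable_w.const_mul 16)
  have hcont : Continuous (fun x : E3 =>
      64 * (Real.sqrt t + ‖x - y‖) ^ (-4 : ℝ) + 16 * (1 + ‖x‖ ^ 2) ^ (-2 : ℝ)) :=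
    (continuous_const.mul ((cont_kt ht).comp (continuous_sub_right y))).add
      (continuous_const.mul cont_w)
  have hintval : ∫ x : E3, (64 * (Real.sqrt t + ‖x - y‖) ^ (-4 : ℝ)
      + 16 * (1 + ‖x‖ ^ 2) ^ (-2 : ℝ))
      = 64 * ((Real.sqrt t)⁻¹ * I0v) + 16 * JJv := by
    rw [integral_add (((integrable_kt ht).comp_sub_right y).const_mul 64)
      (integrable_w.const_mul 16), integral_const_mul, integral_const_mul]
    congr 1
    · congr 1
      have : ∫ x : E3, (Real.sqrt t + ‖x - y‖) ^ (-4 : ℝ)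
          = ∫ x : E3, (Real.sqrt t + ‖x‖) ^ (-4 : ℝ) := by
        simp_rw [sub_eq_add_neg]
        exact integral_add_right_eq_self (fun x : E3 => (Real.sqrt t + ‖x‖) ^ (-4 : ℝ)) (-y)
      rw [this, integral_kt ht, I0v]
  calc ∫⁻ x, ENNReal.ofReal ((Real.sqrt t + ‖x - y‖) ^ (-4 : ℝ))
        * ENNReal.ofReal ((1 + ‖x‖ ^ 2) ^ (-2 : ℝ))
      ≤ ∫⁻ x, ENNReal.ofReal ((64 * (Real.sqrt t + ‖x - y‖) ^ (-4 : ℝ)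
            + 16 * (1 + ‖x‖ ^ 2) ^ (-2 : ℝ)) * (1 + ‖y‖ ^ 2) ^ (-2 : ℝ)) := by
        refine lintegral_mono fun x => ?_
        rw [← ENNReal.ofReal_mul (by positivity)]
        exact ENNReal.ofReal_le_ofReal (schur_ptwise ht x y)
    _ = ∫⁻ x, ENNReal.ofReal (64 * (Real.sqrt t + ‖x - y‖) ^ (-4 : ℝ)
            + 16 * (1 + ‖x‖ ^ 2) ^ (-2 : ℝ))
          * ENNReal.ofReal ((1 + ‖y‖ ^ 2) ^ (-2 : ℝ)) :=
        lintegral_congr fun x => ENNReal.ofReal_mul (by positivity)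
    _ = (∫⁻ x, ENNReal.ofReal (64 * (Real.sqrt t + ‖x - y‖) ^ (-4 : ℝ)
            + 16 * (1 + ‖x‖ ^ 2) ^ (-2 : ℝ)))
          * ENNReal.ofReal ((1 + ‖y‖ ^ 2) ^ (-2 : ℝ)) :=
        lintegral_mul_const'' _ (ENNReal.continuous_ofReal.comp hcont).measurable.aemeasurable
    _ = ENNReal.ofReal (64 * ((Real.sqrt t)⁻¹ * I0v) + 16 * JJv)
          * ENNReal.ofReal ((1 + ‖y‖ ^ 2) ^ (-2 : ℝ)) := by
        rw [← ofReal_integral_eq_lintegral_ofReal hint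
          (Filter.Eventually.of_forall fun x => by positivity), hintval]
    _ ≤ ENNReal.ofReal (CCv * (Real.sqrt t)⁻¹)
          * ENNReal.ofReal ((1 + ‖y‖ ^ 2) ^ (-2 : ℝ)) := by
        refine mul_le_mul_left (ENNReal.ofReal_le_ofReal ?_) _
        have hI := I0v_nonneg; have hJ := JJv_nonneg
        unfold CCv
        nlinarith

lemma core {t : ℝ} (ht : 0 < t) (ht1 : t ≤ 1) {f : E3 → ℝ} (hf : StronglyMeasurable f)
    {p : ℝ≥0∞} (hp : 1 ≤ p) :
    eLpNorm (fun x => ∫ y, (Real.sqrt t + ‖x - y‖) ^ (-4 : ℝ) * f y) p muPhi4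
      ≤ ENNReal.ofReal (CCv * (Real.sqrt t)⁻¹) * eLpNorm f p muPhi4 := by
  have hs : 0 < Real.sqrt t := Real.sqrt_pos.2 ht
  set A : ℝ≥0∞ := ENNReal.ofReal (CCv * (Real.sqrt t)⁻¹) with hA
  have hA0 : A ≠ 0 := by
    rw [hA]
    exact (ENNReal.ofReal_pos.2 (mul_pos CCv_pos (inv_pos.2 hs))).ne'
  have hAtop : A ≠ ∞ := ENNReal.ofReal_ne_top
  set k : E3 → ℝ≥0∞ := fun z => ENNReal.ofReal ((Real.sqrt t + ‖z‖) ^ (-4 : ℝ)) with hk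
  set w : E3 → ℝ≥0∞ := fun x => ENNReal.ofReal ((1 + ‖x‖ ^ 2) ^ (-2 : ℝ)) with hw
  have hkm : Measurable k := kmeasE ht
  have hwm : Measurable w := wmeasE
  have hk0 : ∀ z, k z ≠ 0 := fun z =>
    (ENNReal.ofReal_pos.2 (Real.rpow_pos_of_pos (by positivity) _)).ne'
  have hktop : ∀ z, k z ≠ ∞ := fun z => ENNReal.ofReal_ne_top
  have hw0 : ∀ x, w x ≠ 0 := fun x =>
    (ENNReal.ofReal_pos.2 (Real.rpow_pos_of_pos (by positivity) _)).ne'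
  have hi : ∀ x, ∫⁻ y, k (x - y) ≤ A := by
    intro x
    rw [show (∫⁻ y, k (x - y)) = ENNReal.ofReal ((Real.sqrt t)⁻¹ * I0v) from cond_i ht x, hA]
    refine ENNReal.ofReal_le_ofReal ?_
    have hI := I0v_nonneg; have hJ := JJv_nonneg
    have hinv : (0:ℝ) ≤ (Real.sqrt t)⁻¹ := by positivity
    unfold CCv
    nlinarith
  have hii : ∀ y, ∫⁻ x, k (x - y) * w x ≤ A * w y := fun y => cond_ii ht ht1 y
  set Tf : E3 → ℝ := fun x => ∫ y, (Real.sqrt t + ‖x - y‖) ^ (-4 : ℝ) * f y with hTf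
  have hptw : ∀ x, (‖Tf x‖₊ : ℝ≥0∞) ≤ ∫⁻ y, k (x - y) * (‖f y‖₊ : ℝ≥0∞) := by
    intro x
    refine le_trans (enorm_integral_le_lintegral_enorm _)
      (le_of_eq (lintegral_congr fun y => ?_))
    rw [← ofReal_norm, ← enorm_eq_nnnorm, ← ofReal_norm, norm_mul,
      Real.norm_of_nonneg (by positivity), ENNReal.ofReal_mul (by positivity)]
  have hg : Measurable fun y : E3 => (‖f y‖₊ : ℝ≥0∞) := hf.measurable.nnnorm.coe_nnreal_ennreal
  have hTsm : StronglyMeasurable Tf := by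
    apply MeasureTheory.StronglyMeasurable.integral_prod_right'
      (f := fun q : E3 × E3 => (Real.sqrt t + ‖q.1 - q.2‖) ^ (-4 : ℝ) * f q.2)
    exact (((cont_kt ht).comp (continuous_fst.sub continuous_snd)).stronglyMeasurable).mul
      (hf.comp_measurable measurable_snd)
  rcases eq_or_ne p ∞ with hp_top | hp_ne
  · -- p = ∞
    subst hp_top
    rw [eLpNorm_exponent_top, eLpNorm_exponent_top]
    set M : ℝ≥0∞ := eLpNormEssSup f muPhi4 with hM
    rcases eq_or_ne M ∞ with hMtop | hMne
    · rw [hMtop, ENNReal.mul_top hA0]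
      exact le_top
    · have h1 : ∀ᵐ y ∂muPhi4, (‖f y‖₊ : ℝ≥0∞) ≤ M := enorm_ae_le_eLpNormEssSup f _
      have h2 : ∀ᵐ y ∂(volume : Measure E3), (‖f y‖₊ : ℝ≥0∞) ≤ M := by
        have := (ae_withDensity_iff (p := fun y => (‖f y‖₊ : ℝ≥0∞) ≤ M) hwm).1 h1
        exact this.mono fun y hy => hy (hw0 y)
      have hb : ∀ x, (‖Tf x‖₊ : ℝ≥0∞) ≤ A * M := by
        intro x
        refine le_trans (hptw x) ?_
        calc ∫⁻ y, k (x - y) * (‖f y‖₊ : ℝ≥0∞)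
            ≤ ∫⁻ y, k (x - y) * M :=
              lintegral_mono_ae (h2.mono fun y hy => mul_le_mul_right hy _)
          _ = (∫⁻ y, k (x - y)) * M :=
              lintegral_mul_const'' M (by fun_prop)
          _ ≤ A * M := mul_le_mul_left (hi x) M
      exact essSup_le_of_ae_le _ (Filter.Eventually.of_forall hb)
  · -- p finite
    have hp0 : p ≠ 0 := (lt_of_lt_of_le zero_lt_one hp).ne'
    set pr : ℝ := p.toReal with hpr
    have hpr1 : 1 ≤ pr := by
      rw [hpr, show (1:ℝ) = (1:ℝ≥0∞).toReal from ENNReal.toReal_one.symm]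
      exact ENNReal.toReal_mono hp_ne hp
    have hpr0 : 0 < pr := lt_of_lt_of_le one_pos hpr1
    rw [eLpNorm_eq_lintegral_rpow_enorm_toReal hp0 hp_ne, eLpNorm_eq_lintegral_rpow_enorm_toReal hp0 hp_ne]
    unfold muPhi4
    rw [lintegral_withDensity_eq_lintegral_mul₀ hwm.aemeasurable
        ((hTsm.measurable.enorm).pow_const _).aemeasurable,
      lintegral_withDensity_eq_lintegral_mul₀ hwm.aemeasurable
        ((hf.measurable.enorm.pow_const _)).aemeasurable]
    simp only [Pi.mul_apply]
    have step1 : ∫⁻ x, w x * (‖Tf x‖₊ : ℝ≥0∞) ^ pr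
        ≤ ∫⁻ x, (∫⁻ y, k (x - y) * (‖f y‖₊ : ℝ≥0∞)) ^ pr * w x := by
      refine lintegral_mono fun x => ?_
      rw [mul_comm]
      exact mul_le_mul_left (ENNReal.rpow_le_rpow (hptw x) hpr0.le) _
    have step2 := schur_main hkm hwm hk0 hktop hA0 hAtop hi hii hg hpr1
    calc (∫⁻ x, w x * (‖Tf x‖₊ : ℝ≥0∞) ^ pr) ^ (1 / pr)
        ≤ (A ^ pr * ∫⁻ y, (‖f y‖₊ : ℝ≥0∞) ^ pr * w y) ^ (1 / pr) :=
          ENNReal.rpow_le_rpow (step1.trans step2) (by positivity)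
      _ = A * (∫⁻ y, w y * (‖f y‖₊ : ℝ≥0∞) ^ pr) ^ (1 / pr) := by
          rw [ENNReal.mul_rpow_of_nonneg _ _ (by positivity), ← ENNReal.rpow_mul,
            mul_one_div_cancel hpr0.ne', ENNReal.rpow_one]
          congr 1
          exact congrArg (· ^ (1/pr)) (lintegral_congr fun y => mul_comm _ _)

/-- the convolution with the kernel `(√t + |x-y|)^{-4}` is bounded on
`L^p(Φ₄ dx)` for all `1 ≤ p ≤ ∞` and `0 < t ≤ 1`, with operator norm at most `C t^{-1/2}`,
`C` independent of `t` and `p`. -/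
theorem stmt0 :
    ∃ C > (0 : ℝ), ∀ (p : ℝ≥0∞), 1 ≤ p → ∀ (t : ℝ), 0 < t → t ≤ 1 →
      ∀ f : E3 → ℝ,
        eLpNorm (fun x => ∫ y, (Real.sqrt t + ‖x - y‖) ^ (-4 : ℝ) * f y) p muPhi4
          ≤ ENNReal.ofReal (C * t ^ (-(1 : ℝ) / 2)) * eLpNorm f p muPhi4 := by
  refine ⟨CCv, CCv_pos, ?_⟩
  intro p hp t ht ht1 f
  have hs : 0 < Real.sqrt t := Real.sqrt_pos.2 ht
  have htexp : t ^ (-(1 : ℝ) / 2) = (Real.sqrt t)⁻¹ := by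
    rw [show (-(1 : ℝ) / 2) = -(1 / 2) by norm_num, Real.rpow_neg ht.le,
      ← Real.sqrt_eq_rpow]
  rw [htexp]
  by_cases hfm : AEStronglyMeasurable f (volume : Measure E3)
  · obtain ⟨f', hf'sm, hff'⟩ := hfm
    have hTf : (fun x : E3 => ∫ y, (Real.sqrt t + ‖x - y‖) ^ (-4 : ℝ) * f y)
        = fun x => ∫ y, (Real.sqrt t + ‖x - y‖) ^ (-4 : ℝ) * f' y := by
      funext x
      exact integral_congr_ae (hff'.mono fun y hy => by simp only []; rw [hy])
    have hmu_ac : muPhi4 ≪ (volume : Measure E3) :=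
      withDensity_absolutelyContinuous volume _
    have hff'mu : f =ᵐ[muPhi4] f' := hff'.filter_mono hmu_ac.ae_le
    rw [hTf, eLpNorm_congr_ae hff'mu]
    exact core ht ht1 hf'sm hp
  · have hTf : (fun x : E3 => ∫ y, (Real.sqrt t + ‖x - y‖) ^ (-4 : ℝ) * f y)
        = fun _ => (0 : ℝ) := by
      funext x
      apply integral_undef
      intro hint
      apply hfm
      have h2 : AEStronglyMeasurable
          (fun y : E3 => (Real.sqrt t + ‖x - y‖) ^ (-4 : ℝ) * f y) volume := hint.1
      have hpos : ∀ y : E3, (0:ℝ) < (Real.sqrt t + ‖x - y‖) ^ (-4 : ℝ) := fun y =>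
        Real.rpow_pos_of_pos (by positivity) _
      have h3 : Continuous fun y : E3 => ((Real.sqrt t + ‖x - y‖) ^ (-4 : ℝ))⁻¹ :=
        (((cont_kt ht).comp (continuous_const.sub continuous_id)).inv₀
          fun y => (hpos y).ne')
      have h4 := (h3.aestronglyMeasurable).mul h2
      exact h4.congr (Filter.Eventually.of_forall fun y =>
        inv_mul_cancel_left₀ (hpos y).ne' (f y))
    rw [hTf, eLpNorm_zero']
    exact bot_le
end

section
/- For p = 1 and 0 < t ≤ 1: ‖(1+|x|)^{−4} ∫ (√t + |x−y|)^{−4} (1+|y|)^{4} g(y) dy‖_{L¹(ℝ³)} ≤ C t^{−1/2} ‖g‖_{L¹(ℝ³)} for all nonnegative g ∈ L¹(ℝ³). -/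
open MeasureTheory ENNReal

namespace Stmt1Aux

/-- the finite constant `A = ∫ (1+‖w‖)^{-4}` -/
noncomputable def A : ℝ≥0∞ := ∫⁻ w : E3, ENNReal.ofReal ((1 + ‖w‖) ^ (-4 : ℝ))

lemma meas_jb : Measurable fun w : E3 => ENNReal.ofReal ((1 + ‖w‖) ^ (-4 : ℝ)) := by
  exact ENNReal.measurable_ofReal.comp ((continuous_const.add continuous_norm).rpow_const
    (fun x => Or.inl (by simp only [Pi.add_apply]; positivity))).measurable

lemma A_lt_top : A < ⊤ := by
  have h : Integrable (fun w : E3 => (1 + ‖w‖) ^ (-4 : ℝ)) := by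
    apply integrable_one_add_norm (E := E3)
    rw [finrank_euclideanSpace_fin]; norm_num
  exact h.lintegral_lt_top

lemma key {a b c : ℝ} (ha : 1 ≤ a) (hb : 0 < b) (hc : 0 ≤ c) (h : c ≤ a + b) :
    a ^ (-4 : ℝ) * (b ^ (-4 : ℝ) * c ^ (4 : ℝ)) ≤ 8 * (b ^ (-4 : ℝ) + a ^ (-4 : ℝ)) := by
  have ha0 : (0:ℝ) < a := lt_of_lt_of_le one_pos ha
  have e : ∀ x : ℝ, 0 ≤ x → x ^ (-4 : ℝ) = (x ^ 4)⁻¹ := fun x hx => by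
    rw [show (-4 : ℝ) = -((4:ℕ):ℝ) by norm_num, Real.rpow_neg hx, Real.rpow_natCast]
  rw [e a ha0.le, e b hb.le, show (4:ℝ) = ((4:ℕ):ℝ) by norm_num, Real.rpow_natCast]
  have ha4 : (0:ℝ) < a ^ 4 := by positivity
  have hb4 : (0:ℝ) < b ^ 4 := by positivity
  have hcab : c ^ 4 ≤ (a + b) ^ 4 := pow_le_pow_left₀ hc h 4
  have h8 : (a + b) ^ 4 ≤ 8 * (a ^ 4 + b ^ 4) := by
    nlinarith [sq_nonneg (a - b), sq_nonneg (a + b), sq_nonneg (a ^ 2 - b ^ 2),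
      sq_nonneg (a * b), mul_pos ha0 hb]
  calc (a ^ 4)⁻¹ * ((b ^ 4)⁻¹ * c ^ 4)
      ≤ (a ^ 4)⁻¹ * ((b ^ 4)⁻¹ * (8 * (a ^ 4 + b ^ 4))) := by
        gcongr
        exact hcab.trans h8
    _ = 8 * ((b ^ 4)⁻¹ + (a ^ 4)⁻¹) := by field_simp

lemma scale {s : ℝ} (hs : 0 < s) :
    (∫⁻ z : E3, ENNReal.ofReal ((s + ‖z‖) ^ (-4 : ℝ))) = ENNReal.ofReal s⁻¹ * A := by
  set f : E3 → ℝ≥0∞ := fun z => ENNReal.ofReal ((s + ‖z‖) ^ (-4 : ℝ)) with hf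
  have hfm : Measurable f := by
    exact ENNReal.measurable_ofReal.comp ((continuous_const.add continuous_norm).rpow_const
      (fun x => Or.inl (by simp only [Pi.add_apply]; positivity))).measurable
  have hmap : (∫⁻ w, f (s • w)) = ENNReal.ofReal ((s ^ 3)⁻¹) * ∫⁻ z, f z := by
    rw [← lintegral_map hfm (continuous_const_smul s).measurable,
      Measure.map_addHaar_smul volume hs.ne', lintegral_smul_measure,
      finrank_euclideanSpace_fin, abs_of_nonneg (by positivity), smul_eq_mul]
  have hpt : ∀ w : E3, f (s • w)
      = ENNReal.ofReal (s ^ (-4 : ℝ)) * ENNReal.ofReal ((1 + ‖w‖) ^ (-4 : ℝ)) := by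
    intro w
    have hsw : s + ‖s • w‖ = s * (1 + ‖w‖) := by
      rw [norm_smul, Real.norm_eq_abs, abs_of_pos hs]; ring
    rw [hf]
    simp only
    rw [hsw, Real.mul_rpow hs.le (by positivity), ENNReal.ofReal_mul (by positivity)]
  have hleft : (∫⁻ w, f (s • w)) = ENNReal.ofReal (s ^ (-4 : ℝ)) * A := by
    simp_rw [hpt]
    rw [lintegral_const_mul _ meas_jb]; rfl
  have h1 : ENNReal.ofReal (s ^ (-4 : ℝ)) * A = ENNReal.ofReal ((s ^ 3)⁻¹) * ∫⁻ z, f z := by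
    rw [← hleft, hmap]
  have h2 : (∫⁻ z, f z)
      = ENNReal.ofReal (s ^ 3) * (ENNReal.ofReal ((s ^ 3)⁻¹) * ∫⁻ z, f z) := by
    rw [← mul_assoc, ← ENNReal.ofReal_mul (by positivity),
      mul_inv_cancel₀ (by positivity), ENNReal.ofReal_one, one_mul]
  rw [h2, ← h1, ← mul_assoc, ← ENNReal.ofReal_mul (by positivity)]
  congr 1
  have : s ^ 3 * s ^ (-4 : ℝ) = s⁻¹ := by
    rw [show (-4 : ℝ) = -((4:ℕ):ℝ) by norm_num, Real.rpow_neg hs.le, Real.rpow_natCast]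
    field_simp
  rw [this]

end Stmt1Aux

open Stmt1Aux

/-- the `L¹` endpoint of the weighted convolution estimate:
`‖(1+|x|)^{-4} ∫ (√t+|x-y|)^{-4} (1+|y|)^4 g(y) dy‖_{L¹} ≤ C t^{-1/2} ‖g‖_{L¹}`
for nonnegative `g ∈ L¹` and `0 < t ≤ 1`. -/
theorem stmt1 :
    ∃ C > (0 : ℝ), ∀ (t : ℝ), 0 < t → t ≤ 1 →
      ∀ g : E3 → ℝ, 0 ≤ g → Integrable g →
        ∫⁻ x, ENNReal.ofReal ((1 + ‖x‖) ^ (-4 : ℝ) *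
            ∫ y, (Real.sqrt t + ‖x - y‖) ^ (-4 : ℝ) * (1 + ‖y‖) ^ (4 : ℝ) * g y)
          ≤ ENNReal.ofReal (C * t ^ (-(1 : ℝ) / 2)) * ∫⁻ y, ENNReal.ofReal (g y) := by
  refine ⟨16 * A.toReal + 16, by positivity, ?_⟩
  intro t ht ht1 g₀ hg₀0 hg₀i
  -- replace g₀ by a measurable nonnegative representative g
  obtain ⟨g₁, hg₁m, hgg₁⟩ : ∃ g₁ : E3 → ℝ, Measurable g₁ ∧ g₀ =ᵐ[volume] g₁ :=
    ⟨hg₀i.aestronglyMeasurable.aemeasurable.mk g₀,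
      hg₀i.aestronglyMeasurable.aemeasurable.measurable_mk,
      hg₀i.aestronglyMeasurable.aemeasurable.ae_eq_mk⟩
  set g : E3 → ℝ := fun y => max (g₁ y) 0 with hgdef
  have hgm : Measurable g := hg₁m.max measurable_const
  have hg0 : ∀ y, 0 ≤ g y := fun y => le_max_right _ _
  have hgg : g₀ =ᵐ[volume] g := by
    filter_upwards [hgg₁] with y hy
    simp only [hgdef, ← hy]
    exact (max_eq_left (hg₀0 y)).symm
  set s : ℝ := Real.sqrt t with hsdef
  have hs : 0 < s := Real.sqrt_pos.2 ht
  have hs1 : s ≤ 1 := by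
    rw [hsdef, show (1:ℝ) = Real.sqrt 1 by simp]
    exact Real.sqrt_le_sqrt ht1
  -- reduce to g
  have hredL : (∫⁻ x, ENNReal.ofReal ((1 + ‖x‖) ^ (-4 : ℝ) *
        ∫ y, (s + ‖x - y‖) ^ (-4 : ℝ) * (1 + ‖y‖) ^ (4 : ℝ) * g₀ y))
      = ∫⁻ x, ENNReal.ofReal ((1 + ‖x‖) ^ (-4 : ℝ) *
        ∫ y, (s + ‖x - y‖) ^ (-4 : ℝ) * (1 + ‖y‖) ^ (4 : ℝ) * g y) := by
    apply lintegral_congr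
    intro x
    congr 1
    congr 1
    apply integral_congr_ae
    filter_upwards [hgg] with y hy
    rw [hy]
  have hredR : (∫⁻ y, ENNReal.ofReal (g₀ y)) = ∫⁻ y, ENNReal.ofReal (g y) :=
    lintegral_congr_ae (hgg.mono fun y hy => by simp only [hy])
  rw [hredL, hredR]
  -- the ENNReal kernel bound B
  set B : E3 → E3 → ℝ := fun x y => 8 * ((s + ‖x - y‖) ^ (-4 : ℝ) + (1 + ‖x‖) ^ (-4 : ℝ))
    with hBdef
  have hBcont : Continuous fun p : E3 × E3 => B p.1 p.2 := by
    apply continuous_const.mul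
    apply Continuous.add
    · exact (continuous_const.add
        ((continuous_fst.sub continuous_snd).norm)).rpow_const
        (fun p => Or.inl (by simp only [Pi.add_apply]; positivity))
    · exact (continuous_const.add continuous_fst.norm).rpow_const
        (fun p => Or.inl (by simp only [Pi.add_apply]; positivity))
  have hk1m : ∀ y : E3, Measurable fun x : E3 => ENNReal.ofReal ((s + ‖x - y‖) ^ (-4 : ℝ)) := by
    intro y
    exact ENNReal.measurable_ofReal.comp
      ((continuous_const.add ((continuous_id.sub continuous_const).norm)).rpow_const
        (fun x => Or.inl (by simp only [Pi.add_apply]; positivity))).measurable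
  -- step 1: pointwise in x
  have step1 : ∀ x : E3, ENNReal.ofReal ((1 + ‖x‖) ^ (-4 : ℝ) *
        ∫ y, (s + ‖x - y‖) ^ (-4 : ℝ) * (1 + ‖y‖) ^ (4 : ℝ) * g y)
      ≤ ∫⁻ y, ENNReal.ofReal (B x y) * ENNReal.ofReal (g y) := by
    intro x
    have hkey : ∀ y : E3,
        (1 + ‖x‖) ^ (-4 : ℝ) * ((s + ‖x - y‖) ^ (-4 : ℝ) * (1 + ‖y‖) ^ (4 : ℝ) * g y)
          ≤ B x y * g y := by
      intro y
      have hy : ‖y‖ ≤ ‖x‖ + ‖x - y‖ := by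
        have h0 : x - (x - y) = y := by abel
        calc ‖y‖ = ‖x - (x - y)‖ := by rw [h0]
          _ ≤ ‖x‖ + ‖x - y‖ := norm_sub_le _ _
      have hk := key (a := 1 + ‖x‖) (b := s + ‖x - y‖) (c := 1 + ‖y‖)
        (by linarith [norm_nonneg x]) (by positivity) (by positivity) (by linarith)
      calc (1 + ‖x‖) ^ (-4 : ℝ) * ((s + ‖x - y‖) ^ (-4 : ℝ) * (1 + ‖y‖) ^ (4 : ℝ) * g y)
          = ((1 + ‖x‖) ^ (-4 : ℝ) * ((s + ‖x - y‖) ^ (-4 : ℝ) * (1 + ‖y‖) ^ (4 : ℝ))) * g y := by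
            ring
        _ ≤ B x y * g y := mul_le_mul_of_nonneg_right hk (hg0 y)
    by_cases hI : Integrable (fun y : E3 => (s + ‖x - y‖) ^ (-4 : ℝ) * (1 + ‖y‖) ^ (4 : ℝ) * g y)
    · rw [← integral_const_mul]
      rw [ofReal_integral_eq_lintegral_ofReal (hI.const_mul _)
        (Filter.Eventually.of_forall fun y => by
          have := hg0 y; positivity)]
      apply lintegral_mono
      intro y
      calc ENNReal.ofReal ((1 + ‖x‖) ^ (-4 : ℝ) *
              ((s + ‖x - y‖) ^ (-4 : ℝ) * (1 + ‖y‖) ^ (4 : ℝ) * g y))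
          ≤ ENNReal.ofReal (B x y * g y) := ENNReal.ofReal_le_ofReal (hkey y)
        _ = ENNReal.ofReal (B x y) * ENNReal.ofReal (g y) :=
            ENNReal.ofReal_mul (by rw [hBdef]; positivity)
    · rw [integral_undef hI, mul_zero, ENNReal.ofReal_zero]
      exact zero_le
  -- step 2: swap and integrate in x
  have hswapm : AEMeasurable (Function.uncurry fun x y =>
      ENNReal.ofReal (B x y) * ENNReal.ofReal (g y)) ((volume : Measure E3).prod volume) := by
    apply Measurable.aemeasurable
    apply Measurable.fun_mul
    · exact (ENNReal.continuous_ofReal.comp hBcont).measurable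
    · exact (ENNReal.measurable_ofReal.comp hgm).comp measurable_snd
  have hinner : ∀ y : E3, (∫⁻ x, ENNReal.ofReal (B x y))
      = 8 * (ENNReal.ofReal s⁻¹ * A + A) := by
    intro y
    have hsplit : ∀ x : E3, ENNReal.ofReal (B x y)
        = 8 * (ENNReal.ofReal ((s + ‖x - y‖) ^ (-4 : ℝ))
            + ENNReal.ofReal ((1 + ‖x‖) ^ (-4 : ℝ))) := by
      intro x
      rw [hBdef]
      simp only
      rw [ENNReal.ofReal_mul (by norm_num), ENNReal.ofReal_add (by positivity) (by positivity)]
      norm_num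
    simp_rw [hsplit]
    rw [lintegral_const_mul' _ _ (by norm_num), lintegral_add_left (hk1m y)]
    have hfm2 : Measurable fun z : E3 => ENNReal.ofReal ((s + ‖z‖) ^ (-4 : ℝ)) :=
      ENNReal.measurable_ofReal.comp ((continuous_const.add continuous_norm).rpow_const
        (fun x => Or.inl (by simp only [Pi.add_apply]; positivity))).measurable
    have htrans : (∫⁻ x : E3, ENNReal.ofReal ((s + ‖x - y‖) ^ (-4 : ℝ)))
        = ∫⁻ z : E3, ENNReal.ofReal ((s + ‖z‖) ^ (-4 : ℝ)) :=
      (measurePreserving_sub_right volume y).lintegral_comp hfm2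
    rw [htrans, scale hs]
    rfl
  have hts : t ^ (-(1 : ℝ) / 2) = s⁻¹ := by
    rw [show (-(1 : ℝ) / 2) = -(1 / 2) by ring, Real.rpow_neg ht.le, hsdef,
      Real.sqrt_eq_rpow]
  have hos1 : (1 : ℝ≥0∞) ≤ ENNReal.ofReal s⁻¹ := by
    rw [ENNReal.one_le_ofReal]
    rw [le_inv_comm₀ one_pos hs]
    simpa using hs1
  calc (∫⁻ x, ENNReal.ofReal ((1 + ‖x‖) ^ (-4 : ℝ) *
        ∫ y, (s + ‖x - y‖) ^ (-4 : ℝ) * (1 + ‖y‖) ^ (4 : ℝ) * g y))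
      ≤ ∫⁻ x, ∫⁻ y, ENNReal.ofReal (B x y) * ENNReal.ofReal (g y) :=
        lintegral_mono step1
    _ = ∫⁻ y, ∫⁻ x, ENNReal.ofReal (B x y) * ENNReal.ofReal (g y) :=
        lintegral_lintegral_swap hswapm
    _ = ∫⁻ y, (∫⁻ x, ENNReal.ofReal (B x y)) * ENNReal.ofReal (g y) := by
        apply lintegral_congr
        intro y
        exact lintegral_mul_const _ (ENNReal.continuous_ofReal.comp
          (hBcont.comp (Continuous.prodMk_left y))).measurable
    _ = ∫⁻ y, (8 * (ENNReal.ofReal s⁻¹ * A + A)) * ENNReal.ofReal (g y) := by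
        apply lintegral_congr
        intro y
        rw [hinner y]
    _ = (8 * (ENNReal.ofReal s⁻¹ * A + A)) * ∫⁻ y, ENNReal.ofReal (g y) :=
        lintegral_const_mul _ (ENNReal.measurable_ofReal.comp hgm)
    _ ≤ ENNReal.ofReal ((16 * A.toReal + 16) * t ^ (-(1 : ℝ) / 2)) * ∫⁻ y, ENNReal.ofReal (g y) := by
        apply mul_le_mul_left
        have hRHS : ENNReal.ofReal ((16 * A.toReal + 16) * t ^ (-(1 : ℝ) / 2))
            = (16 * A + 16) * ENNReal.ofReal s⁻¹ := by
          rw [hts, ENNReal.ofReal_mul (by positivity),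
            ENNReal.ofReal_add (by positivity) (by norm_num),
            ENNReal.ofReal_mul (by norm_num), ENNReal.ofReal_toReal A_lt_top.ne]
          norm_num
        rw [hRHS]
        calc 8 * (ENNReal.ofReal s⁻¹ * A + A)
            ≤ 8 * (ENNReal.ofReal s⁻¹ * A + ENNReal.ofReal s⁻¹ * A) := by
              gcongr
              calc A = 1 * A := (one_mul A).symm
                _ ≤ ENNReal.ofReal s⁻¹ * A := mul_le_mul_left hos1 A
          _ = (16 * A) * ENNReal.ofReal s⁻¹ := by ring
          _ ≤ (16 * A) * ENNReal.ofReal s⁻¹ + 16 * ENNReal.ofReal s⁻¹ := le_self_add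
          _ = (16 * A + 16) * ENNReal.ofReal s⁻¹ := by ring
end
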